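/- arXiv:1503.02232 — 2 statements merged into one kernel-verified Lean document; each statement's English description precedes it below -/
import Mathlib

section
/- Let A(y) = h(y)/(|Jac T(y)| h(Ty)), so that Σ_{Ty=x} A(y) = 1 with A(y) > 0. Suppose ψ̄: 𝕋^d → ℂ is continuous, θ: 𝕋^d → ℝ is continuous, and Σ_{Ty=x} A(y) e^{iθ(y)} ψ̄(y) = ψ̄(x) for all x. If T is topologically mixing (so backward orbits are dense) and |ψ̄| attains its maximum, then |ψ̄| is constant on 𝕋^d, and moreover e^{iθ(y)} ψ̄(y) = ψ̄(Ty) for all y. -/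
/-- maximum principle for the twisted averaging equation
`Σ_{Ty=x} A(y) e^{iθ(y)} ψ̄(y) = ψ̄(x)`: if backward orbits are dense and `|ψ̄|` attains its
maximum, then `|ψ̄|` is constant and `e^{iθ(y)} ψ̄(y) = ψ̄(Ty)` for all `y`. -/
theorem stmt_3 {X : Type*} [TopologicalSpace X] (T : X → X)
    (hfin : ∀ x, (T ⁻¹' {x}).Finite)
    (A : X → ℝ) (hApos : ∀ y, 0 < A y)
    (hAsum : ∀ x, ∑ᶠ y ∈ T ⁻¹' {x}, A y = 1)
    (ψ : X → ℂ) (hψ : Continuous ψ)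
    (θ : X → ℝ) (hθ : Continuous θ)
    (heq : ∀ x, ∑ᶠ y ∈ T ⁻¹' {x},
        (A y : ℂ) * Complex.exp (Complex.I * (θ y : ℂ)) * ψ y = ψ x)
    (hmix : ∀ z : X, Dense {y : X | ∃ n : ℕ, 0 < n ∧ T^[n] y = z})
    (hmax : ∃ z : X, ∀ x, ‖ψ x‖ ≤ ‖ψ z‖) :
    (∀ x x' : X, ‖ψ x‖ = ‖ψ x'‖) ∧
      (∀ y : X, Complex.exp (Complex.I * (θ y : ℂ)) * ψ y = ψ (T y)) := by
  obtain ⟨z, hz⟩ := hmax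
  set M : ℝ := ‖ψ z‖ with hM
  have hexpnorm : ∀ w : X, ‖Complex.exp (Complex.I * (θ w : ℂ))‖ = 1 := by
    intro w
    rw [Complex.norm_exp]
    simp
  -- key equality-case lemma
  have key : ∀ x, ‖ψ x‖ = M → ∀ y, T y = x →
      Complex.exp (Complex.I * (θ y : ℂ)) * ψ y = ψ x := by
    intro x hx y hy
    set s := (hfin x).toFinset with hs
    have hys : y ∈ s := by
      rw [hs, Set.Finite.mem_toFinset]
      exact hy
    have hcoe : (↑s : Set X) = T ⁻¹' {x} := (hfin x).coe_toFinset
    have hsumA : ∑ w ∈ s, A w = 1 := by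
      rw [← finsum_mem_coe_finset, hcoe]; exact hAsum x
    set v : X → ℂ := fun w => Complex.exp (Complex.I * (θ w : ℂ)) * ψ w with hv
    have hsumv : ∑ w ∈ s, (A w : ℂ) * v w = ψ x := by
      rw [← heq x, ← hcoe, finsum_mem_coe_finset]
      exact Finset.sum_congr rfl fun w _ => (mul_assoc _ _ _).symm
    have hnv : ∀ w, ‖v w‖ = ‖ψ w‖ := by
      intro w
      rw [hv]; simp only [norm_mul, hexpnorm, one_mul]
    set b : X → ℝ := fun w => ((starRingEnd ℂ) (ψ x) * v w).re with hb
    have hble : ∀ w, b w ≤ M ^ 2 := by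
      intro w
      calc b w ≤ ‖(starRingEnd ℂ) (ψ x) * v w‖ := Complex.re_le_norm _
        _ = ‖ψ x‖ * ‖ψ w‖ := by rw [norm_mul, hnv, RCLike.norm_conj]
        _ ≤ M * M := by
            rw [hx]
            exact mul_le_mul_of_nonneg_left (hz w) (norm_nonneg _)
        _ = M ^ 2 := (sq M).symm
    have hsumb : ∑ w ∈ s, A w * b w = M ^ 2 := by
      have h1 : ((starRingEnd ℂ) (ψ x) * ψ x).re = M ^ 2 := by
        rw [mul_comm, Complex.mul_conj]
        simp only [Complex.ofReal_re]
        rw [Complex.normSq_eq_norm_sq, hx]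
      calc ∑ w ∈ s, A w * b w
          = ((starRingEnd ℂ) (ψ x) * ∑ w ∈ s, (A w : ℂ) * v w).re := by
            rw [Finset.mul_sum, Complex.re_sum]
            refine Finset.sum_congr rfl fun w _ => ?_
            rw [hb]
            rw [show (starRingEnd ℂ) (ψ x) * ((A w : ℂ) * v w)
                = (A w : ℂ) * ((starRingEnd ℂ) (ψ x) * v w) by ring]
            simp [Complex.re_ofReal_mul]
        _ = M ^ 2 := by rw [hsumv, h1]
    have hbeq : ∀ w ∈ s, b w = M ^ 2 := by
      intro w hw
      have hzero : ∑ w ∈ s, A w * (M ^ 2 - b w) = 0 := by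
        have : ∑ w ∈ s, A w * (M ^ 2 - b w)
            = (∑ w ∈ s, A w) * M ^ 2 - ∑ w ∈ s, A w * b w := by
          rw [Finset.sum_mul, ← Finset.sum_sub_distrib]
          exact Finset.sum_congr rfl fun w _ => by ring
        rw [this, hsumA, hsumb]; ring
      have hnn : ∀ w ∈ s, 0 ≤ A w * (M ^ 2 - b w) := fun w _ =>
        mul_nonneg (hApos w).le (sub_nonneg.mpr (hble w))
      have := (Finset.sum_eq_zero_iff_of_nonneg hnn).mp hzero w hw
      have hA := (hApos w).ne'
      nlinarith [this, hApos w, hble w]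
    -- now deduce v y = ψ x
    have hby : b y = M ^ 2 := hbeq y hys
    have hns : Complex.normSq (v y - ψ x) = 0 := by
      have hexp : Complex.normSq (v y - ψ x)
          = Complex.normSq (v y) + Complex.normSq (ψ x)
            - 2 * ((starRingEnd ℂ) (ψ x) * v y).re := by
        rw [Complex.normSq_sub]
        rw [show (v y * (starRingEnd ℂ) (ψ x)).re
            = ((starRingEnd ℂ) (ψ x) * v y).re by rw [mul_comm]]
      have h1 : Complex.normSq (v y) ≤ M ^ 2 := by
        rw [Complex.normSq_eq_norm_sq, hnv]
        exact sq_le_sq' (by linarith [norm_nonneg (ψ y), hz y]) (hz y)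
      have h2 : Complex.normSq (ψ x) = M ^ 2 := by
        rw [Complex.normSq_eq_norm_sq, hx]
      have h3 : 0 ≤ Complex.normSq (v y - ψ x) := Complex.normSq_nonneg _
      have hby' : ((starRingEnd ℂ) (ψ x) * v y).re = M ^ 2 := hby
      rw [hexp]
      linarith
    have := Complex.normSq_eq_zero.mp hns
    have : v y = ψ x := by
      have := sub_eq_zero.mp this
      exact this
    exact this
  -- preimage chains of z have norm M
  have chain : ∀ n : ℕ, ∀ y, T^[n] y = z → ‖ψ y‖ = M := by
    intro n
    induction n with
    | zero => intro y hy; simp only [Function.iterate_zero, id] at hy; rw [hy]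
    | succ n ih =>
      intro y hy
      rw [Function.iterate_succ_apply] at hy
      have hTy : ‖ψ (T y)‖ = M := ih (T y) hy
      have hk := key (T y) hTy y rfl
      have : ‖ψ y‖ = ‖ψ (T y)‖ := by
        rw [← hk, norm_mul, hexpnorm, one_mul]
      rw [this, hTy]
  -- density gives constancy of the norm
  have hconst : ∀ x, ‖ψ x‖ = M := by
    have hd := hmix z
    have heqon : Set.EqOn (fun x => ‖ψ x‖) (fun _ => M)
        {y : X | ∃ n : ℕ, 0 < n ∧ T^[n] y = z} := by
      intro y hy
      obtain ⟨n, _, hny⟩ := hy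
      exact chain n y hny
    have := Continuous.ext_on hd hψ.norm continuous_const heqon
    exact fun x => congrFun this x
  refine ⟨fun x x' => by rw [hconst x, hconst x'], fun y => ?_⟩
  exact key (T y) (hconst (T y)) y rfl
end

section
/- Suppose V: 𝕋^d → ℝ^d is a C¹ vector field satisfying (D_xT)^t V(Tx) = V(x) + (D_xτ)^t n* for all x, where T is smooth expanding and τ ∈ C^∞(𝕋^d, ℝ^ℓ), n* ∈ ℝ^ℓ, and suppose the 1-form V(x)·dx is exact, with potential u(x) = ∫_{Γ_{0,x}} V(z)·dz. Then n*·τ(x) = c − u(x) + u(Tx) for all x ∈ 𝕋^d, where c = n*·τ(0) − u(T0); that is, n*·τ is a coboundary over T up to the constant c. -/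
open scoped RealInnerProductSpace

/-- if the C¹ vector field `V` satisfies the cocycle relation
`(D_xT)^t V(Tx) = V(x) + (D_xτ)^t n*` and the 1-form `V·dx` is exact with potential `u`
(normalized by `u(0)=0`), then `n*·τ(x) = c − u(x) + u(Tx)` with `c = n*·τ(0) − u(T0)`. -/
theorem stmt_11 {d ℓ : ℕ}
    (T : EuclideanSpace ℝ (Fin d) → EuclideanSpace ℝ (Fin d))
    (τ : EuclideanSpace ℝ (Fin d) → EuclideanSpace ℝ (Fin ℓ))
    (DT : EuclideanSpace ℝ (Fin d) → (EuclideanSpace ℝ (Fin d) →L[ℝ] EuclideanSpace ℝ (Fin d)))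
    (Dτ : EuclideanSpace ℝ (Fin d) → (EuclideanSpace ℝ (Fin d) →L[ℝ] EuclideanSpace ℝ (Fin ℓ)))
    (hT : ∀ x, HasFDerivAt T (DT x) x) (hτ : ∀ x, HasFDerivAt τ (Dτ x) x)
    (nstar : EuclideanSpace ℝ (Fin ℓ))
    (V : EuclideanSpace ℝ (Fin d) → EuclideanSpace ℝ (Fin d)) (hV : Continuous V)
    (u : EuclideanSpace ℝ (Fin d) → ℝ)
    (hgrad : ∀ x, HasGradientAt u (V x) x) (hu0 : u 0 = 0)
    (hcocycle : ∀ x, (ContinuousLinearMap.adjoint (DT x)) (V (T x)) =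
        V x + (ContinuousLinearMap.adjoint (Dτ x)) nstar) :
    ∀ x, (inner ℝ nstar (τ x) : ℝ) = ((inner ℝ nstar (τ 0) : ℝ) - u (T 0)) - u x + u (T x) := by
  set f : EuclideanSpace ℝ (Fin d) → ℝ :=
    fun x => u (T x) - u x - (inner ℝ nstar (τ x) : ℝ) with hf
  have hderiv : ∀ x, HasFDerivAt f (0 : EuclideanSpace ℝ (Fin d) →L[ℝ] ℝ) x := by
    intro x
    have h1 : HasFDerivAt (fun y => u (T y))
        (((InnerProductSpace.toDual ℝ _) (V (T x)) : EuclideanSpace ℝ (Fin d) →L[ℝ] ℝ).comp (DT x)) x :=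
      ((hgrad (T x)).hasFDerivAt).comp x (hT x)
    have h2 : HasFDerivAt u ((InnerProductSpace.toDual ℝ _) (V x) : EuclideanSpace ℝ (Fin d) →L[ℝ] ℝ) x := (hgrad x).hasFDerivAt
    have h3 : HasFDerivAt (fun y => (inner ℝ nstar (τ y) : ℝ))
        ((innerSL ℝ nstar).comp (Dτ x)) x :=
      ((innerSL ℝ nstar).hasFDerivAt).comp x (hτ x)
    have := (h1.sub h2).sub h3
    refine this.congr_fderiv ?_
    ext v
    have hco := hcocycle x
    have : (inner ℝ ((ContinuousLinearMap.adjoint (DT x)) (V (T x))) v : ℝ)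
        = inner ℝ (V x + (ContinuousLinearMap.adjoint (Dτ x)) nstar) v := by rw [hco]
    rw [ContinuousLinearMap.adjoint_inner_left, inner_add_left,
      ContinuousLinearMap.adjoint_inner_left] at this
    simp only [ContinuousLinearMap.zero_apply, ContinuousLinearMap.sub_apply,
      ContinuousLinearMap.comp_apply, innerSL_apply_apply, InnerProductSpace.toDual_apply_apply]
    linarith
  have hdiff : Differentiable ℝ f := fun x => (hderiv x).differentiableAt
  have hconst : ∀ x, f x = f 0 := fun x =>
    is_const_of_fderiv_eq_zero hdiff (fun y => (hderiv y).fderiv) x 0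
  intro x
  have hx := hconst x
  simp only [hf, hu0, sub_zero] at hx
  linarith
end
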